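/- arXiv:2509.20794 — 6 statements merged into one kernel-verified Lean document; each statement's English description precedes it below -/
import Mathlib

section
/- Let R be a finite commutative Frobenius ring, let C be a linear code of length n over R, and let G ∈ R^{m×n} be a generator matrix of C (i.e., the rows of G span C as an R-module), with columns g_1, …, g_n ∈ R^m. Then the cardinality of the R-submodule of R^m spanned by g_1, …, g_n equals |C|. -/
noncomputable section
open scoped BigOperators

/-- The dual of a linear code `C ⊆ Rⁿ` with respect to the standard inner
product `u·v = ∑ ℓ, u ℓ * v ℓ`. -/
def dualCode {R : Type*} [CommRing R] {n : ℕ} (C : Submodule R (Fin n → R)) :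
    Submodule R (Fin n → R) where
  carrier := {v | ∀ u ∈ C, ∑ ℓ, u ℓ * v ℓ = 0}
  add_mem' := by
    intro v w hv hw u hu
    simp only [Set.mem_setOf_eq] at *
    have h1 := hv u hu
    have h2 := hw u hu
    simp only [Pi.add_apply, mul_add, Finset.sum_add_distrib, h1, h2, add_zero]
  zero_mem' := by
    intro u hu
    simp
  smul_mem' := by
    intro c v hv u hu
    simp only [Set.mem_setOf_eq] at *
    have h := hv u hu
    have : ∑ ℓ, u ℓ * (c • v) ℓ = c * ∑ ℓ, u ℓ * v ℓ := by
      rw [Finset.mul_sum]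
      exact Finset.sum_congr rfl fun ℓ _ => by
        simp only [Pi.smul_apply, smul_eq_mul]; ring
    rw [this, h, mul_zero]

/-- A finite commutative ring is Frobenius iff `|C|·|C⊥| = |R|ⁿ` for every
linear code `C` of every length `n` over `R`. -/
def IsFrobeniusRing (R : Type*) [CommRing R] [Fintype R] : Prop :=
  ∀ (n : ℕ) (C : Submodule R (Fin n → R)),
    Nat.card C * Nat.card (dualCode C) = Fintype.card R ^ n

lemma dual_eq_ker {R : Type*} [CommRing R] {m n : ℕ} (C : Submodule R (Fin n → R))
    (G : Matrix (Fin m) (Fin n) R)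
    (hG : Submodule.span R (Set.range fun i => G i) = C) :
    dualCode C = LinearMap.ker G.mulVecLin := by
  ext v
  constructor
  · intro hv
    simp only [LinearMap.mem_ker, Matrix.mulVecLin_apply]
    funext i
    have : (G i) ∈ C := by
      rw [← hG]; exact Submodule.subset_span ⟨i, rfl⟩
    simpa [Matrix.mulVec, dotProduct] using hv (G i) this
  · intro hv u hu
    rw [← hG] at hu
    simp only [LinearMap.mem_ker, Matrix.mulVecLin_apply] at hv
    -- the map u ↦ ∑ ℓ, u ℓ * v ℓ is linear; its kernel contains the rows
    let φ : (Fin n → R) →ₗ[R] R :=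
      { toFun := fun u => ∑ ℓ, u ℓ * v ℓ
        map_add' := fun a b => by simp [add_mul, Finset.sum_add_distrib]
        map_smul' := fun c a => by simp [Finset.mul_sum, mul_assoc] }
    have hle : Submodule.span R (Set.range fun i => G i) ≤ LinearMap.ker φ := by
      rw [Submodule.span_le]
      rintro _ ⟨i, rfl⟩
      have := congrFun hv i
      simpa [φ, Matrix.mulVec, dotProduct] using this
    exact hle hu

/-- the span of the columns of a generator matrix of a linear
code `C` over a finite commutative Frobenius ring has the same cardinality
as `C`. -/
theorem stmt0 {R : Type*} [CommRing R] [Fintype R] (hR : IsFrobeniusRing R)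
    {m n : ℕ} (C : Submodule R (Fin n → R)) (G : Matrix (Fin m) (Fin n) R)
    (hG : Submodule.span R (Set.range fun i => G i) = C) :
    Nat.card (Submodule.span R (Set.range fun ℓ => G.transpose ℓ) : Submodule R (Fin m → R))
      = Nat.card C := by
  have hrange : (Submodule.span R (Set.range fun ℓ => G.transpose ℓ) : Submodule R (Fin m → R))
      = LinearMap.range G.mulVecLin := (Matrix.range_mulVecLin G).symm
  have hker : dualCode C = LinearMap.ker G.mulVecLin := dual_eq_ker C G hG
  have h1 : Nat.card (Fin n → R)
      = Nat.card (LinearMap.ker G.mulVecLin)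
        * Nat.card ((Fin n → R) ⧸ LinearMap.ker G.mulVecLin) :=
    Submodule.card_eq_card_quotient_mul_card _
  have h2 : Nat.card ((Fin n → R) ⧸ LinearMap.ker G.mulVecLin)
      = Nat.card (LinearMap.range G.mulVecLin) :=
    Nat.card_congr (G.mulVecLin.quotKerEquivRange).toEquiv
  have hRn : Nat.card (Fin n → R) = Fintype.card R ^ n := by
    simp [Nat.card_eq_fintype_card]
  have hfrob := hR n C
  have hpos : 0 < Nat.card (dualCode C) := Nat.card_pos
  have key : Nat.card (LinearMap.range G.mulVecLin) * Nat.card (dualCode C)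
      = Nat.card C * Nat.card (dualCode C) := by
    rw [hfrob, ← hRn, h1, h2, hker, mul_comm]
  rw [hrange]
  exact Nat.eq_of_mul_eq_mul_right hpos key

end
end

section
/- Let C be a linear code of length n over a finite commutative Frobenius ring R. Then (C⊥)⊥ = C. -/
noncomputable section
open scoped BigOperators

/-- over a finite commutative Frobenius ring, the dual of the
dual of a linear code `C` is `C` itself. -/
theorem stmt1 {R : Type*} [CommRing R] [Fintype R] (hR : IsFrobeniusRing R)
    {n : ℕ} (C : Submodule R (Fin n → R)) :
    dualCode (dualCode C) = C := by
  have hle : C ≤ dualCode (dualCode C) := by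
    intro v hv u hu
    have := hu v hv
    rw [← this]
    exact Finset.sum_congr rfl fun ℓ _ => mul_comm _ _
  have h1 := hR n C
  have h2 := hR n (dualCode C)
  have hpos : 0 < Nat.card (dualCode C) := Nat.card_pos
  have hcard : Nat.card (dualCode (dualCode C)) = Nat.card C := by
    have : Nat.card (dualCode C) * Nat.card (dualCode (dualCode C)) =
        Nat.card C * Nat.card (dualCode C) := by rw [h1, h2]
    rw [mul_comm (Nat.card C)] at this
    exact Nat.eq_of_mul_eq_mul_left hpos this
  apply le_antisymm _ hle
  intro x hx
  have hset : (C : Set (Fin n → R)) = (dualCode (dualCode C) : Set (Fin n → R)) := by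
    apply Set.eq_of_subset_of_ncard_le hle
    rw [← Nat.card_coe_set_eq, ← Nat.card_coe_set_eq]
    exact hcard.le
  rw [← SetLike.mem_coe, ← hset] at hx
  exact hx

end
end

section
/- Let C be a linear code of length n over a finite commutative Frobenius ring R. Then the Hamming weight enumerators satisfy W_{C⊥}(x, y) = (1/|C|) · W_C(x + (|R| − 1)y, x − y), as an identity of polynomials in x and y. -/
noncomputable section
open scoped BigOperators

open MvPolynomial

/-- The Hamming weight of a word `c ∈ Rⁿ`. -/
def hwt {R : Type*} [CommRing R] {n : ℕ} (c : Fin n → R) : ℕ :=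
  Nat.card {ℓ : Fin n // c ℓ ≠ 0}

/-- The Hamming weight enumerator `W_C(x, y) = ∑_{c ∈ C} x^(n - wt c) * y^(wt c)`,
as a polynomial in the two variables `X 0 = x` and `X 1 = y`. -/
def hwEnum {R : Type*} [CommRing R] [Fintype R] {n : ℕ}
    (C : Submodule R (Fin n → R)) : MvPolynomial (Fin 2) ℚ :=
  haveI : Fintype C := Fintype.ofFinite C
  ∑ c : C, X 0 ^ (n - hwt (c : Fin n → R)) * X 1 ^ hwt (c : Fin n → R)

section Aux

set_option linter.unusedSectionVars false

variable {R : Type*} [CommRing R] [Fintype R] {n : ℕ}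

theorem mem_dualCode {C : Submodule R (Fin n → R)} {v : Fin n → R} :
    v ∈ dualCode C ↔ ∀ u ∈ C, ∑ ℓ, u ℓ * v ℓ = 0 := Iff.rfl

/-- The number of codewords of `D` vanishing on `S`. -/
def AA (D : Submodule R (Fin n → R)) (S : Finset (Fin n)) : ℕ :=
  Nat.card {c : D // ∀ ℓ ∈ S, (c : Fin n → R) ℓ = 0}

theorem hwt_compl (c : Fin n → R) :
    haveI := Classical.decEq R
    (Finset.univ.filter (fun ℓ => c ℓ = 0)).card + hwt c = n := by
  classical
  have h1 : hwt c = (Finset.univ.filter (fun ℓ => ¬ c ℓ = 0)).card := by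
    rw [hwt, Nat.card_eq_fintype_card, Fintype.card_subtype]
  rw [h1]
  simpa using Finset.card_filter_add_card_filter_not
    (s := (Finset.univ : Finset (Fin n))) (p := fun ℓ => c ℓ = 0)

theorem expand_enum (D : Submodule R (Fin n → R)) (s a b : MvPolynomial (Fin 2) ℚ)
    (hs : s = b + a) :
    haveI : Fintype D := Fintype.ofFinite D
    (∑ c : D, s ^ (n - hwt (c : Fin n → R)) * a ^ hwt (c : Fin n → R)) =
      ∑ S : Finset (Fin n),
        b ^ S.card * a ^ (n - S.card) * MvPolynomial.C (AA D S : ℚ) := by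
  classical
  letI : Fintype D := Fintype.ofFinite D
  show (∑ c : D, s ^ (n - hwt (c : Fin n → R)) * a ^ hwt (c : Fin n → R)) =
      ∑ S : Finset (Fin n),
        b ^ S.card * a ^ (n - S.card) * MvPolynomial.C (AA D S : ℚ)
  have key : ∀ c : Fin n → R,
      s ^ (n - hwt c) * a ^ hwt c
        = ∑ S : Finset (Fin n),
            if (∀ ℓ ∈ S, c ℓ = 0) then b ^ S.card * a ^ (n - S.card) else 0 := by
    intro c
    set Z : Finset (Fin n) := Finset.univ.filter (fun ℓ => c ℓ = 0) with hZ
    have hcard : Z.card + hwt c = n := hwt_compl c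
    have h1 : n - hwt c = Z.card := by omega
    have h2 : s ^ Z.card = ∑ t ∈ Z.powerset, b ^ t.card * a ^ (Z.card - t.card) := by
      calc s ^ Z.card = ∏ _ℓ ∈ Z, (b + a) := by rw [Finset.prod_const, hs]
        _ = ∑ t ∈ Z.powerset, (∏ _ℓ ∈ t, b) * ∏ _ℓ ∈ Z \ t, a := Finset.prod_add _ _ _
        _ = ∑ t ∈ Z.powerset, b ^ t.card * a ^ (Z.card - t.card) := by
            refine Finset.sum_congr rfl fun t ht => ?_
            rw [Finset.prod_const, Finset.prod_const,
              Finset.card_sdiff_of_subset (Finset.mem_powerset.mp ht)]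
    have h3 : s ^ (n - hwt c) * a ^ hwt c
        = ∑ t ∈ Z.powerset, b ^ t.card * a ^ (n - t.card) := by
      rw [h1, h2, Finset.sum_mul]
      refine Finset.sum_congr rfl fun t ht => ?_
      have htZ : t.card ≤ Z.card := Finset.card_le_card (Finset.mem_powerset.mp ht)
      rw [mul_assoc, ← pow_add]
      congr 2
      omega
    rw [h3]
    have h4 : ∀ S : Finset (Fin n), (∀ ℓ ∈ S, c ℓ = 0) ↔ S ∈ Z.powerset := by
      intro S
      rw [Finset.mem_powerset]
      constructor
      · intro h ℓ hℓ
        simp only [hZ, Finset.mem_filter, Finset.mem_univ, true_and]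
        exact h ℓ hℓ
      · intro h ℓ hℓ
        have := h hℓ
        simp only [hZ, Finset.mem_filter] at this
        exact this.2
    rw [show (∑ S : Finset (Fin n),
        if (∀ ℓ ∈ S, c ℓ = 0) then b ^ S.card * a ^ (n - S.card) else 0)
      = ∑ S : Finset (Fin n),
        if S ∈ Z.powerset then b ^ S.card * a ^ (n - S.card) else 0 from
      Finset.sum_congr rfl fun S _ => by rw [if_congr (h4 S) rfl rfl]]
    rw [Finset.sum_ite_mem, Finset.univ_inter]
  calc (∑ c : D, s ^ (n - hwt (c : Fin n → R)) * a ^ hwt (c : Fin n → R))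
      = ∑ c : D, ∑ S : Finset (Fin n),
          if (∀ ℓ ∈ S, (c : Fin n → R) ℓ = 0) then b ^ S.card * a ^ (n - S.card) else 0 := by
        exact Finset.sum_congr rfl fun c _ => key c
    _ = ∑ S : Finset (Fin n), ∑ c : D,
          if (∀ ℓ ∈ S, (c : Fin n → R) ℓ = 0) then b ^ S.card * a ^ (n - S.card) else 0 :=
        Finset.sum_comm
    _ = ∑ S : Finset (Fin n),
          b ^ S.card * a ^ (n - S.card) * MvPolynomial.C (AA D S : ℚ) := by
        refine Finset.sum_congr rfl fun S _ => ?_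
        rw [← Finset.sum_filter, Finset.sum_const]
        have hc : (Finset.univ.filter
            (fun c : D => ∀ ℓ ∈ S, (c : Fin n → R) ℓ = 0)).card = AA D S := by
          rw [AA, Nat.card_eq_fintype_card, Fintype.card_subtype]
        rw [hc, nsmul_eq_mul, ← MvPolynomial.C_eq_coe_nat, mul_comm]

theorem card_key (hR : IsFrobeniusRing R) (C : Submodule R (Fin n → R))
    (S : Finset (Fin n)) :
    AA (dualCode C) S * Nat.card C = Fintype.card R ^ (n - S.card) * AA C Sᶜ := by
  classical
  set A : Finset (Fin n) := Sᶜ with hA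
  have hAcard : A.card = n - S.card := by
    simp [hA, Finset.card_compl]
  set m : ℕ := A.card with hm
  set e : {ℓ // ℓ ∈ A} ≃ Fin m := A.equivFin with he
  -- the projection onto the coordinates in A
  set π : (Fin n → R) →ₗ[R] (Fin m → R) :=
    { toFun := fun u j => u (e.symm j : {ℓ // ℓ ∈ A})
      map_add' := fun _ _ => rfl
      map_smul' := fun _ _ => rfl } with hπ
  set D : Submodule R (Fin m → R) := C.map π with hD
  -- inner products transfer along π
  have inner_eq : ∀ u v : Fin n → R, (∀ ℓ ∈ S, v ℓ = 0) →
      (∑ j, π u j * π v j) = ∑ ℓ, u ℓ * v ℓ := by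
    intro u v hv
    have h1 : (∑ j, π u j * π v j)
        = ∑ i : {ℓ // ℓ ∈ A}, u i * v i := by
      rw [← Equiv.sum_comp e.symm (fun i : {ℓ // ℓ ∈ A} => u i * v i)]
      rfl
    rw [h1, Finset.sum_coe_sort A (fun ℓ => u ℓ * v ℓ)]
    refine Finset.sum_subset (Finset.subset_univ A) ?_
    intro ℓ _ hℓ
    have : ℓ ∈ S := by
      simpa [hA] using hℓ
    rw [hv ℓ this, mul_zero]
  -- Fact 1 : |C| = |D| * AA C A
  have fact1 : Nat.card C = Nat.card D * AA C A := by
    set f : C →+ (Fin m → R) := (π.comp C.subtype).toAddMonoidHom with hf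
    have hker : Nat.card f.ker = AA C A := by
      rw [AA]
      refine Nat.card_congr (Equiv.subtypeEquivRight ?_)
      intro c
      rw [AddMonoidHom.mem_ker]
      constructor
      · intro h ℓ hℓ
        have := congrFun h (e ⟨ℓ, hℓ⟩)
        simpa [hf, hπ] using this
      · intro h
        funext j
        have hmem : ((e.symm j : {ℓ // ℓ ∈ A}) : Fin n) ∈ A := (e.symm j).2
        simpa [hf, hπ] using h _ hmem
    have hrange : Nat.card f.range = Nat.card D := by
      refine Nat.card_congr (Equiv.subtypeEquivRight ?_)
      intro x
      rw [AddMonoidHom.mem_range]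
      constructor
      · rintro ⟨c, rfl⟩
        exact Submodule.mem_map.mpr ⟨c, c.2, rfl⟩
      · intro hx
        obtain ⟨u, hu, rfl⟩ := Submodule.mem_map.mp hx
        exact ⟨⟨u, hu⟩, rfl⟩
    have A1 : Nat.card C = Nat.card (C ⧸ f.ker) * Nat.card f.ker :=
      AddSubgroup.card_eq_card_quotient_mul_card_addSubgroup f.ker
    have A2 : Nat.card (C ⧸ f.ker) = Nat.card f.range :=
      Nat.card_congr (QuotientAddGroup.quotientKerEquivRange f).toEquiv
    rw [A1, A2, hrange, hker]
  -- Fact 2 : AA (dualCode C) S = |dualCode D|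
  have fact2 : AA (dualCode C) S = Nat.card (dualCode D) := by
    rw [AA]
    refine Nat.card_congr ?_
    refine
      { toFun := fun v => ⟨π (v.1 : Fin n → R), ?_⟩
        invFun := fun w =>
          ⟨⟨fun ℓ => if h : ℓ ∈ A then (w : Fin m → R) (e ⟨ℓ, h⟩) else 0, ?_⟩, ?_⟩
        left_inv := ?_
        right_inv := ?_ }
    · -- π v ∈ dualCode D
      intro d hd
      obtain ⟨u, hu, rfl⟩ := Submodule.mem_map.mp hd
      rw [inner_eq u (v.1 : Fin n → R) (fun ℓ hℓ => v.2 ℓ hℓ)]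
      exact v.1.2 u hu
    · -- extension lies in dualCode C
      intro u hu
      show (∑ ℓ, u ℓ * (if h : ℓ ∈ A then (w : Fin m → R) (e ⟨ℓ, h⟩) else 0)) = 0
      have h1 : (∑ ℓ, u ℓ * (if h : ℓ ∈ A then (w : Fin m → R) (e ⟨ℓ, h⟩) else 0))
          = ∑ i : {ℓ // ℓ ∈ A}, u i * (w : Fin m → R) (e i) := by
        rw [← Finset.sum_subset (Finset.subset_univ A)
          (fun ℓ _ hℓ => by rw [dif_neg hℓ, mul_zero])]
        rw [← Finset.sum_coe_sort A
          (fun ℓ => u ℓ * if h : ℓ ∈ A then (w : Fin m → R) (e ⟨ℓ, h⟩) else 0)]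
        refine Finset.sum_congr rfl fun i _ => ?_
        rw [dif_pos i.2]
      rw [h1, ← Equiv.sum_comp e.symm
        (fun i : {ℓ // ℓ ∈ A} => u i * (w : Fin m → R) (e i))]
      have h2 : ∀ j : Fin m,
          u ((e.symm j : {ℓ // ℓ ∈ A}) : Fin n) * (w : Fin m → R) (e (e.symm j))
            = π u j * (w : Fin m → R) j := by
        intro j
        rw [Equiv.apply_symm_apply]
        rfl
      rw [Finset.sum_congr rfl fun j _ => h2 j]
      exact w.2 (π u) (Submodule.mem_map.mpr ⟨u, hu, rfl⟩)
    · -- vanishes on S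
      intro ℓ hℓ
      have : ℓ ∉ A := by simp [hA, hℓ]
      exact dif_neg this
    · -- left inverse
      rintro ⟨⟨v, hv⟩, hvS⟩
      ext ℓ
      simp only
      by_cases h : ℓ ∈ A
      · rw [dif_pos h]
        show v ((e.symm (e ⟨ℓ, h⟩) : {ℓ // ℓ ∈ A}) : Fin n) = v ℓ
        rw [Equiv.symm_apply_apply]
      · rw [dif_neg h]
        have : ℓ ∈ S := by simpa [hA] using h
        exact (hvS ℓ this).symm
    · -- right inverse
      rintro ⟨w, hw⟩
      ext j
      show (if h : ((e.symm j : {ℓ // ℓ ∈ A}) : Fin n) ∈ A then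
          w (e ⟨((e.symm j : {ℓ // ℓ ∈ A}) : Fin n), h⟩) else 0) = w j
      rw [dif_pos (e.symm j).2]
      congr 1
      rw [show (⟨((e.symm j : {ℓ // ℓ ∈ A}) : Fin n), (e.symm j).2⟩ : {ℓ // ℓ ∈ A})
          = e.symm j from rfl]
      rw [Equiv.apply_symm_apply]
  -- combine with the Frobenius property
  have hfrob := hR m D
  calc AA (dualCode C) S * Nat.card C
      = Nat.card (dualCode D) * (Nat.card D * AA C A) := by rw [fact2, fact1]
    _ = (Nat.card D * Nat.card (dualCode D)) * AA C A := by ring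
    _ = Fintype.card R ^ m * AA C A := by rw [hfrob]
    _ = Fintype.card R ^ (n - S.card) * AA C Sᶜ := by rw [hAcard]

end Aux

/-- the MacWilliams identity for the Hamming weight enumerator over
a finite commutative Frobenius ring:
`W_{C⊥}(x, y) = (1/|C|) · W_C(x + (|R| − 1)y, x − y)`. -/
theorem stmt3 {R : Type*} [CommRing R] [Fintype R] (hR : IsFrobeniusRing R)
    {n : ℕ} (C : Submodule R (Fin n → R)) :
    hwEnum (dualCode C) =
      MvPolynomial.C ((Nat.card C : ℚ)⁻¹) *
        (MvPolynomial.bind₁ (fun i : Fin 2 =>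
          if i = 0 then X 0 + MvPolynomial.C ((Fintype.card R : ℚ) - 1) * X 1
          else X 0 - X 1)) (hwEnum C) := by
  classical
  letI : Fintype C := Fintype.ofFinite C
  letI : Fintype (dualCode C) := Fintype.ofFinite (dualCode C)
  set q : ℚ := (Fintype.card R : ℚ) with hq
  -- left hand side
  have lhs_eq : hwEnum (dualCode C)
      = ∑ S : Finset (Fin n), (X 0 - X 1) ^ S.card * (X 1 : MvPolynomial (Fin 2) ℚ)
          ^ (n - S.card) * MvPolynomial.C (AA (dualCode C) S : ℚ) := by
    rw [hwEnum]
    exact expand_enum (dualCode C) (X 0) (X 1) (X 0 - X 1) (by ring)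
  -- apply bind₁ to the enumerator of C
  have bind_eq : (MvPolynomial.bind₁ (fun i : Fin 2 =>
        if i = 0 then X 0 + MvPolynomial.C (q - 1) * X 1
        else X 0 - X 1)) (hwEnum C)
      = ∑ S : Finset (Fin n), (MvPolynomial.C q * X 1 : MvPolynomial (Fin 2) ℚ) ^ S.card
          * (X 0 - X 1) ^ (n - S.card) * MvPolynomial.C (AA C S : ℚ) := by
    rw [hwEnum, map_sum]
    have : ∀ c : C, (MvPolynomial.bind₁ (fun i : Fin 2 =>
        if i = 0 then X 0 + MvPolynomial.C (q - 1) * X 1 else X 0 - X 1))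
          (X 0 ^ (n - hwt (c : Fin n → R)) * X 1 ^ hwt (c : Fin n → R))
        = (X 0 + MvPolynomial.C (q - 1) * X 1 : MvPolynomial (Fin 2) ℚ) ^ (n - hwt (c : Fin n → R))
          * (X 0 - X 1) ^ hwt (c : Fin n → R) := by
      intro c
      rw [map_mul, map_pow, map_pow, MvPolynomial.bind₁_X_right,
        MvPolynomial.bind₁_X_right]
      norm_num
    rw [Finset.sum_congr rfl fun c _ => this c]
    exact expand_enum C (X 0 + MvPolynomial.C (q - 1) * X 1) (X 0 - X 1)
      (MvPolynomial.C q * X 1) (by rw [map_sub, map_one]; ring)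
  rw [lhs_eq]
  rw [bind_eq]
  rw [Finset.mul_sum]
  -- reindex the right-hand side by complementation
  have reind := Fintype.sum_bijective (compl : Finset (Fin n) → Finset (Fin n))
    compl_bijective
    (fun S => MvPolynomial.C ((Nat.card C : ℚ))⁻¹ *
      ((MvPolynomial.C q * X 1 : MvPolynomial (Fin 2) ℚ) ^ Sᶜ.card * (X 0 - X 1) ^ (n - Sᶜ.card)
        * MvPolynomial.C (AA C Sᶜ : ℚ)))
    (fun S => MvPolynomial.C ((Nat.card C : ℚ))⁻¹ *
      ((MvPolynomial.C q * X 1 : MvPolynomial (Fin 2) ℚ) ^ S.card * (X 0 - X 1) ^ (n - S.card)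
        * MvPolynomial.C (AA C S : ℚ)))
    (fun S => rfl)
  rw [← reind]
  refine Finset.sum_congr rfl fun S _ => ?_
  have hSn : S.card ≤ n := by
    simpa using Finset.card_le_univ S
  have hc1 : Sᶜ.card = n - S.card := by
    simp [Finset.card_compl]
  have hkey := card_key hR C S
  have hCne : (Nat.card C : ℚ) ≠ 0 := by
    have : 0 < Nat.card C := Nat.card_pos
    exact_mod_cast this.ne'
  have hkeyQ : (AA (dualCode C) S : ℚ) * (Nat.card C : ℚ)
      = q ^ (n - S.card) * (AA C Sᶜ : ℚ) := by
    rw [hq]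
    exact_mod_cast congrArg (Nat.cast : ℕ → ℚ) hkey
  have hconst : (AA (dualCode C) S : ℚ)
      = (Nat.card C : ℚ)⁻¹ * (q ^ (n - S.card) * (AA C Sᶜ : ℚ)) := by
    rw [inv_mul_eq_div, eq_div_iff hCne]
    exact hkeyQ
  beta_reduce
  rw [hc1, show n - (n - S.card) = S.card by omega, hconst]
  rw [mul_pow, ← map_pow (MvPolynomial.C : ℚ →+* MvPolynomial (Fin 2) ℚ) q]
  rw [map_mul, map_mul]
  ring

end
end

section
/- Let C be a linear code of length n over a finite commutative Frobenius ring R. Define I = (I_0, …, I_t) and J = (J_0, …, J_t) by I_i = {j ∈ {0,…,t} : a_j a_k ≠ 0 for all k such that a_i a_k ≠ 0} and J_i = {j ∈ {0,…,t} : a_kR ⊄ a_jR for all k such that a_i a_k ≠ 0}. Then for every submultiset X of t·[n], B^I_{C⊥}(X) = (1/|C|) · (∏_{i=0}^t |a_iR|^{|M_i(X)|}) · B^J_C(X). -/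
noncomputable section
open scoped BigOperators

open Classical

/-- For a tuple `F = (F₀, …, F_t)` of subsets of `{0, …, t}` and a submultiset
`X ⊆ t·[n]` (identified with its multiplicity function `m : [n] → {0, …, t}`),
`B^F_C(X) = |{c ∈ C : S_i(c) ⊆ ∪_{j ∈ F_i} M_j(X) for all i}|`. -/
def BF {R : Type*} [CommRing R] {t n : ℕ} (a : Fin (t + 1) → R)
    (C : Submodule R (Fin n → R)) (F : Fin (t + 1) → Set (Fin (t + 1)))
    (m : Fin n → Fin (t + 1)) : ℕ :=
  Nat.card {c : C // ∀ (i : Fin (t + 1)) (ℓ : Fin n),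
    Ideal.span {(c : Fin n → R) ℓ} = Ideal.span {a i} → m ℓ ∈ F i}

section AuxLemmas

variable {R : Type*} [CommRing R]

/-- Second isomorphism theorem cardinality identity. -/
lemma card_sup_mul_card_inf' {M : Type*} [AddCommGroup M] [Module R M] [Finite M]
    (p q : Submodule R M) :
    Nat.card ↥(p ⊔ q) * Nat.card ↥(p ⊓ q) = Nat.card p * Nat.card q := by
  have hp := Submodule.card_eq_card_quotient_mul_card (Submodule.comap p.subtype (p ⊓ q))
  have hs := Submodule.card_eq_card_quotient_mul_card (Submodule.comap (p ⊔ q).subtype q)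
  have e1 : Nat.card (Submodule.comap p.subtype (p ⊓ q)) = Nat.card ↥(p ⊓ q) :=
    Nat.card_congr (Submodule.comapSubtypeEquivOfLe inf_le_left).toEquiv
  have e2 : Nat.card (Submodule.comap (p ⊔ q).subtype q) = Nat.card q :=
    Nat.card_congr (Submodule.comapSubtypeEquivOfLe le_sup_right).toEquiv
  have e3 : Nat.card (↥p ⧸ Submodule.comap p.subtype (p ⊓ q)) =
      Nat.card (↥(p ⊔ q) ⧸ Submodule.comap (p ⊔ q).subtype q) :=
    Nat.card_congr (LinearMap.quotientInfEquivSupQuotient p q).toEquiv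
  rw [e1, e3] at hp
  rw [e2] at hs
  rw [hp, hs]
  ring

/-- `|bR| · |Ann(b)| = |R|`. -/
lemma card_span_mul_card_torsion [Fintype R] (b : R) :
    Nat.card (Ideal.span {b}) * Nat.card (Ideal.torsionOf R R b) = Fintype.card R := by
  have h := Submodule.card_eq_card_quotient_mul_card (Ideal.torsionOf R R b)
  have e : Nat.card (R ⧸ Ideal.torsionOf R R b) = Nat.card (Ideal.span {b}) :=
    Nat.card_congr (Ideal.quotTorsionOfEquivSpanSingleton R R b).toEquiv
  rw [← e, mul_comm, ← h, Nat.card_eq_fintype_card]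

end AuxLemmas

/-- with
`I_i = {j : a_j a_k ≠ 0 for all k with a_i a_k ≠ 0}` and
`J_i = {j : a_k R ⊄ a_j R for all k with a_i a_k ≠ 0}`, one has
`B^I_{C⊥}(X) = (1/|C|) (∏ᵢ |a_i R|^{|M_i(X)|}) B^J_C(X)` for every submultiset
`X` of `t·[n]`. -/


theorem stmt6 {R : Type*} [CommRing R] [Fintype R] (hR : IsFrobeniusRing R)
    {t : ℕ} (a : Fin (t + 1) → R)
    (hrep : ∀ r : R, ∃ i, Ideal.span {r} = Ideal.span {a i})
    (hinj : ∀ i j, Ideal.span {a i} = Ideal.span {a j} → i = j)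
    {n : ℕ} (C : Submodule R (Fin n → R))
    (I J : Fin (t + 1) → Set (Fin (t + 1)))
    (hI : ∀ i, I i = {j | ∀ k, a i * a k ≠ 0 → a j * a k ≠ 0})
    (hJ : ∀ i, J i = {j | ∀ k, a i * a k ≠ 0 → ¬ Ideal.span {a k} ≤ Ideal.span {a j}}) :
    ∀ m : Fin n → Fin (t + 1),
      (BF a (dualCode C) I m : ℚ) =
        (Nat.card C : ℚ)⁻¹ *
          (∏ i : Fin (t + 1),
            (Nat.card (Ideal.span {a i}) : ℚ) ^ (Nat.card {ℓ : Fin n // m ℓ = i})) *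
          (BF a C J m : ℚ) := by
  intro m
  classical
  set T : Fin n → Ideal R := fun ℓ => Ideal.torsionOf R R (a (m ℓ)) with hT
  set D : Submodule R (Fin n → R) := Submodule.pi Set.univ T with hD
  have span_dvd : ∀ x y : R, Ideal.span {x} = Ideal.span {y} → y ∣ x := fun x y h =>
    Ideal.mem_span_singleton.mp (h ▸ Ideal.mem_span_singleton_self x)
  -- membership in D
  have hDmem : ∀ v : Fin n → R, v ∈ D ↔ ∀ ℓ, v ℓ * a (m ℓ) = 0 := by
    intro v
    rw [hD, Submodule.mem_pi]
    constructor
    · intro h ℓ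
      have := h ℓ (Set.mem_univ ℓ)
      rwa [hT, Ideal.mem_torsionOf_iff, smul_eq_mul] at this
    · intro h ℓ _
      rw [hT, Ideal.mem_torsionOf_iff, smul_eq_mul]
      exact h ℓ
  -- membership in the dual of D
  have hdualD : ∀ v : Fin n → R,
      v ∈ dualCode D ↔ ∀ (ℓ : Fin n) (s : R), s * a (m ℓ) = 0 → s * v ℓ = 0 := by
    intro v
    constructor
    · intro hv ℓ s hs
      have hu : (Pi.single ℓ s : Fin n → R) ∈ D := by
        rw [hDmem]
        intro ℓ'
        by_cases h : ℓ' = ℓ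
        · subst h; simpa using hs
        · simp [Pi.single_eq_of_ne h]
      have h0 := hv _ hu
      rwa [Fintype.sum_eq_single ℓ
        (fun ℓ' h => by simp [Pi.single_eq_of_ne h]), Pi.single_eq_same] at h0
    · intro h u hu
      exact Finset.sum_eq_zero fun ℓ _ => h ℓ (u ℓ) ((hDmem u).1 hu ℓ)
  -- the dual of a sup is the inf of duals (as membership)
  have hdual_sup : ∀ v : Fin n → R,
      v ∈ dualCode (C ⊔ D) ↔ v ∈ dualCode C ∧ v ∈ dualCode D := by
    intro v
    constructor
    · intro h
      exact ⟨fun u hu => h u (Submodule.mem_sup_left hu),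
        fun u hu => h u (Submodule.mem_sup_right hu)⟩
    · rintro ⟨h1, h2⟩ u hu
      obtain ⟨c, hc, d, hd, rfl⟩ := Submodule.mem_sup.mp hu
      have : ∑ ℓ, (c + d) ℓ * v ℓ = (∑ ℓ, c ℓ * v ℓ) + ∑ ℓ, d ℓ * v ℓ := by
        rw [← Finset.sum_add_distrib]
        exact Finset.sum_congr rfl fun ℓ _ => by simp [add_mul]
      rw [this, h1 c hc, h2 d hd, add_zero]
  -- the `J`-condition is membership in `D`
  have hJc : ∀ v : Fin n → R,
      (∀ i ℓ, Ideal.span {v ℓ} = Ideal.span {a i} → m ℓ ∈ J i) ↔ v ∈ D := by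
    intro v
    rw [hDmem]
    constructor
    · intro h ℓ
      obtain ⟨i, hi⟩ := hrep (v ℓ)
      have hm := h i ℓ hi
      rw [hJ i] at hm
      have h0 : a i * a (m ℓ) = 0 := by
        by_contra h0
        exact hm (m ℓ) h0 le_rfl
      obtain ⟨s, hs⟩ := span_dvd _ _ hi
      rw [hs]
      linear_combination s * h0
    · intro h i ℓ hspan
      rw [hJ i]
      intro k hk hle
      obtain ⟨s, hs⟩ := Ideal.span_singleton_le_span_singleton.mp hle
      obtain ⟨u, hu⟩ := span_dvd _ _ hspan.symm
      apply hk
      rw [hu, hs]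
      linear_combination (u * s) * h ℓ
  -- the `I`-condition is membership in the dual of `D`
  have hIc : ∀ v : Fin n → R,
      (∀ i ℓ, Ideal.span {v ℓ} = Ideal.span {a i} → m ℓ ∈ I i) ↔ v ∈ dualCode D := by
    intro v
    rw [hdualD]
    constructor
    · intro h ℓ s hs
      obtain ⟨i, hi⟩ := hrep (v ℓ)
      have hm := h i ℓ hi
      rw [hI i] at hm
      obtain ⟨k, hk⟩ := hrep s
      have h1 : a (m ℓ) * a k = 0 := by
        obtain ⟨w, hw⟩ := span_dvd _ _ hk.symm
        rw [hw]
        linear_combination w * hs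
      have h2 : a i * a k = 0 := by
        by_contra h2
        exact hm k h2 h1
      obtain ⟨x, hx⟩ := span_dvd _ _ hk
      obtain ⟨y, hy⟩ := span_dvd _ _ hi
      rw [hx, hy]
      linear_combination (x * y) * h2
    · intro h i ℓ hspan
      rw [hI i]
      intro k hk h0
      have h1 : a k * v ℓ = 0 := h ℓ (a k) (by linear_combination h0)
      obtain ⟨y, hy⟩ := span_dvd _ _ hspan.symm
      apply hk
      rw [hy]
      linear_combination y * h1
  -- identification of the two `BF` counts
  have hBJ : BF a C J m = Nat.card ↥(C ⊓ D) := by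
    unfold BF
    exact Nat.card_congr
      { toFun := fun x => ⟨x.1.1, Submodule.mem_inf.mpr ⟨x.1.2, (hJc _).mp x.2⟩⟩,
        invFun := fun y => ⟨⟨y.1, (Submodule.mem_inf.mp y.2).1⟩,
          (hJc _).mpr (Submodule.mem_inf.mp y.2).2⟩,
        left_inv := fun x => rfl, right_inv := fun y => rfl }
  have hBI : BF a (dualCode C) I m = Nat.card ↥(dualCode (C ⊔ D)) := by
    unfold BF
    exact Nat.card_congr
      { toFun := fun x => ⟨x.1.1, (hdual_sup _).mpr ⟨x.1.2, (hIc _).mp x.2⟩⟩,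
        invFun := fun y => ⟨⟨y.1, ((hdual_sup _).mp y.2).1⟩,
          (hIc _).mpr ((hdual_sup _).mp y.2).2⟩,
        left_inv := fun x => rfl, right_inv := fun y => rfl }
  -- cardinality of D
  have hcardD : Nat.card ↥D *
      (∏ i : Fin (t + 1),
        Nat.card (Ideal.span {a i}) ^ (Nat.card {ℓ : Fin n // m ℓ = i})) =
      Fintype.card R ^ n := by
    have h1 : Nat.card ↥D = ∏ ℓ, Nat.card (T ℓ) := by
      rw [← Nat.card_pi]
      exact Nat.card_congr
        { toFun := fun v ℓ => ⟨v.1 ℓ, (Submodule.mem_pi.mp v.2) ℓ (Set.mem_univ ℓ)⟩,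
          invFun := fun f => ⟨fun ℓ => f ℓ, Submodule.mem_pi.mpr fun ℓ _ => (f ℓ).2⟩,
          left_inv := fun v => rfl, right_inv := fun f => rfl }
    have h2 : ∏ ℓ, (Nat.card (Ideal.span {a (m ℓ)}) * Nat.card (T ℓ)) =
        Fintype.card R ^ n := by
      rw [Finset.prod_congr rfl fun ℓ _ => card_span_mul_card_torsion (a (m ℓ))]
      simp
    have h3 : ∏ ℓ, Nat.card (Ideal.span {a (m ℓ)}) =
        ∏ i : Fin (t + 1),
          Nat.card (Ideal.span {a i}) ^ (Nat.card {ℓ : Fin n // m ℓ = i}) := by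
      rw [← Finset.prod_fiberwise_of_maps_to' (fun ℓ _ => Finset.mem_univ (m ℓ))
        (fun i => Nat.card (Ideal.span {a i}))]
      refine Finset.prod_congr rfl fun i _ => ?_
      rw [Finset.prod_const]
      congr 1
      rw [Nat.card_eq_fintype_card]
      exact (Fintype.card_subtype _).symm
    rw [h1, ← h3, ← Finset.prod_mul_distrib, ← h2]
    exact Finset.prod_congr rfl fun ℓ _ => mul_comm _ _
  -- finishing: Frobenius + second isomorphism
  have hfrob := hR n (C ⊔ D)
  have hsupinf := card_sup_mul_card_inf' C D
  have pos : ∀ p : Submodule R (Fin n → R), 0 < Nat.card ↥p := fun p =>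
    Nat.card_pos_iff.mpr ⟨⟨⟨0, p.zero_mem⟩⟩, inferInstance⟩
  rw [hBI, hBJ]
  have e1 : (Nat.card ↥(C ⊔ D) : ℚ) * (Nat.card ↥(dualCode (C ⊔ D)) : ℚ) =
      ((Fintype.card R : ℚ)) ^ n := by exact_mod_cast hfrob
  have e2 : (Nat.card ↥(C ⊔ D) : ℚ) * (Nat.card ↥(C ⊓ D) : ℚ) =
      (Nat.card C : ℚ) * (Nat.card ↥D : ℚ) := by exact_mod_cast hsupinf
  have e3 : (Nat.card ↥D : ℚ) *
      (∏ i : Fin (t + 1),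
        (Nat.card (Ideal.span {a i}) : ℚ) ^ (Nat.card {ℓ : Fin n // m ℓ = i})) =
      ((Fintype.card R : ℚ)) ^ n := by exact_mod_cast hcardD
  have hS : (Nat.card ↥(C ⊔ D) : ℚ) ≠ 0 := by
    exact_mod_cast (pos (C ⊔ D)).ne'
  have hDc : (Nat.card ↥D : ℚ) ≠ 0 := by
    exact_mod_cast (pos D).ne'
  have hCc : (Nat.card C : ℚ) ≠ 0 := by
    exact_mod_cast (pos C).ne'
  rw [eq_comm, mul_assoc, inv_mul_eq_iff_eq_mul₀ hCc]
  apply mul_left_cancel₀ (mul_ne_zero hS hDc)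
  linear_combination ((Nat.card ↥(C ⊔ D) : ℚ) * (Nat.card ↥(C ⊓ D) : ℚ)) * e3 -
    ((Nat.card C : ℚ) * (Nat.card ↥D : ℚ)) * e1 +
    ((Fintype.card R : ℚ) ^ n) * e2

end
end

section
/- Let R be a finite commutative Frobenius ring and let χ : (R, +) → ℂ^× be a generating character of R. Let S = (s_{ij}) be the (t+1)×(t+1) complex matrix with s_{ij} = Σ_{r ∈ R, rR = a_jR} χ(r a_i). Let A be the 0–1 matrix with A_{ij} = 1 iff a_iR ⊆ a_jR, let D = diag(|a_0R|, …, |a_tR|), and let Q be the 0–1 matrix with Q_{ij} = 1 iff a_jR ⊆ (a_iR)⊥ = {r ∈ R : a_i r = 0}. Then S = Q D A^{−1} (with A^{−1} the inverse of A over ℚ, viewed in ℂ). -/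
noncomputable section
open scoped BigOperators

open Classical

/-- the character-sum matrix `S` of Wood's MacWilliams identity
decomposes as `S = Q D A⁻¹`. -/
theorem stmt9 {R : Type*} [CommRing R] [Fintype R] (hR : IsFrobeniusRing R)
    {t : ℕ} (a : Fin (t + 1) → R)
    (hrep : ∀ r : R, ∃ i, Ideal.span {r} = Ideal.span {a i})
    (hinj : ∀ i j, Ideal.span {a i} = Ideal.span {a j} → i = j)
    (χ : AddChar R ℂ)
    (hχ : ∀ I : Ideal R, (∀ x ∈ I, χ x = 1) → I = ⊥)
    (S A D Q : Matrix (Fin (t + 1)) (Fin (t + 1)) ℂ)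
    (hS : ∀ i j, S i j = ∑ r : R,
      if Ideal.span {r} = Ideal.span {a j} then χ (r * a i) else 0)
    (hA : ∀ i j, A i j = if Ideal.span {a i} ≤ Ideal.span {a j} then 1 else 0)
    (hD : D = Matrix.diagonal fun i => (Nat.card (Ideal.span {a i}) : ℂ))
    (hQ : ∀ i j, Q i j =
      if ∀ r ∈ Ideal.span {a j}, a i * r = 0 then 1 else 0) :
    S = Q * D * A⁻¹ := by
  classical
  -- det A = 1
  have hAdet : A.det = 1 := by
    rw [Matrix.det_apply]
    rw [Finset.sum_eq_single (1 : Equiv.Perm (Fin (t + 1)))]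
    · simp [hA]
    · intro σ _ hσ
      by_cases hall : ∀ i, Ideal.span {a (σ i)} ≤ Ideal.span {a i}
      · exfalso
        apply hσ
        have key : ∀ (k : ℕ) (i : Fin (t + 1)),
            Ideal.span {a ((σ ^ k) (σ i))} ≤ Ideal.span {a (σ i)} := by
          intro k
          induction k with
          | zero => intro i; simp
          | succ k ih =>
            intro i
            have h1 : (σ ^ (k + 1)) (σ i) = σ ((σ ^ k) (σ i)) := by
              rw [pow_succ']; rfl
            rw [h1]
            exact le_trans (hall _) (ih i)
        apply Equiv.ext
        intro i
        show σ i = i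
        have hN : 0 < orderOf σ := orderOf_pos σ
        obtain ⟨m, hm⟩ := Nat.exists_eq_add_of_lt hN
        have hσN : (σ ^ orderOf σ) i = i := by rw [pow_orderOf_eq_one]; rfl
        have h2 : (σ ^ orderOf σ) i = (σ ^ m) (σ i) := by
          rw [hm]; simp only [zero_add]; rw [pow_succ]; rfl
        have h3 : Ideal.span {a i} ≤ Ideal.span {a (σ i)} := by
          have hk := key m i
          rw [← h2, hσN] at hk
          exact hk
        exact (hinj (σ i) i (le_antisymm (hall i) h3))
      · push_neg at hall
        obtain ⟨i, hi⟩ := hall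
        have hz : A (σ i) i = 0 := by rw [hA]; simp [hi]
        refine smul_eq_zero_of_right _ ?_
        exact Finset.prod_eq_zero (Finset.mem_univ i) hz
    · simp
  have hAunit : IsUnit A.det := by rw [hAdet]; exact isUnit_one
  -- Main: S * A = Q * D
  have hSA : S * A = Q * D := by
    ext i j
    rw [Matrix.mul_apply]
    -- LHS computation
    have step1 : ∀ k, S i k * A k j =
        ∑ r : R, if Ideal.span {r} = Ideal.span {a k} ∧
            Ideal.span {a k} ≤ Ideal.span {a j} then χ (r * a i) else 0 := by
      intro k
      rw [hS, hA, Finset.sum_mul]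
      refine Finset.sum_congr rfl fun r _ => ?_
      by_cases h1 : Ideal.span {r} = Ideal.span {a k} <;>
        by_cases h2 : Ideal.span {a k} ≤ Ideal.span {a j} <;>
        simp [h1, h2]
    rw [Finset.sum_congr rfl fun k _ => step1 k, Finset.sum_comm]
    have step2 : ∀ r : R, (∑ k, if Ideal.span {r} = Ideal.span {a k} ∧
            Ideal.span {a k} ≤ Ideal.span {a j} then χ (r * a i) else 0) =
        if r ∈ Ideal.span {a j} then χ (r * a i) else 0 := by
      intro r
      obtain ⟨k₀, hk₀⟩ := hrep r
      rw [Finset.sum_eq_single k₀]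
      · rw [← hk₀, Ideal.span_singleton_le_iff_mem]
        simp
      · intro k _ hk
        rw [if_neg]
        rintro ⟨h1, -⟩
        exact hk (hinj k k₀ (h1.symm.trans hk₀))
      · simp
    rw [Finset.sum_congr rfl fun r _ => step2 r]
    -- RHS
    rw [hD, Matrix.mul_diagonal, hQ]
    set I := Ideal.span {a j} with hI
    by_cases h : ∀ r ∈ I, a i * r = 0
    · rw [if_pos h, one_mul]
      have : ∀ r : R, (if r ∈ I then χ (r * a i) else 0) =
          (if r ∈ I then (1 : ℂ) else 0) := by
        intro r
        split_ifs with hr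
        · rw [mul_comm, h r hr, AddChar.map_zero_eq_one]
        · rfl
      rw [Finset.sum_congr rfl fun r _ => this r, Finset.sum_boole]
      rw [Nat.card_eq_fintype_card, Fintype.card_subtype]
    · rw [if_neg h, zero_mul]
      by_cases h2 : ∀ r ∈ I, χ (a i * r) = 1
      · exfalso
        apply h
        intro r hr
        have hJ : Submodule.map (LinearMap.mulLeft R (a i)) I = ⊥ := by
          apply hχ
          rintro x hx
          obtain ⟨r, hr, rfl⟩ := hx
          exact h2 r hr
        have : a i * r ∈ Submodule.map (LinearMap.mulLeft R (a i)) I :=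
          ⟨r, hr, rfl⟩
        rw [hJ] at this
        exact this
      · push_neg at h2
        obtain ⟨s, hs, hχs⟩ := h2
        set T : ℂ := ∑ r : R, if r ∈ I then χ (r * a i) else 0 with hT
        have key : χ (a i * s) * T = T := by
          rw [hT, Finset.mul_sum]
          rw [← Fintype.sum_equiv (Equiv.addLeft s)
            (fun r => χ (a i * s) * (if r ∈ I then χ (r * a i) else 0))
            (fun r => if r ∈ I then χ (r * a i) else 0) ?_]
          intro r
          show χ (a i * s) * (if r ∈ I then χ (r * a i) else 0) = if s + r ∈ I then χ ((s + r) * a i) else 0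
          by_cases hr : r ∈ I
          · rw [if_pos hr, if_pos (I.add_mem hs hr), add_mul,
              AddChar.map_add_eq_mul, mul_comm s (a i)]
          · rw [if_neg hr, if_neg (fun hc => hr (by simpa using I.sub_mem hc hs)),
              mul_zero]
        have : (χ (a i * s) - 1) * T = 0 := by rw [sub_mul, key, one_mul, sub_self]
        rcases mul_eq_zero.mp this with h3 | h3
        · exact absurd (sub_eq_zero.mp h3) hχs
        · exact h3
  calc S = S * A * A⁻¹ := (Matrix.mul_nonsing_inv_cancel_right A S hAunit).symm
    _ = Q * D * A⁻¹ := by rw [hSA]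

end
end

section
/- Let R be a finite commutative principal ideal ring with representatives a_0, …, a_t of its principal ideals. Let A be the (t+1)×(t+1) 0–1 matrix with A_{ij} = 1 iff a_iR ⊆ a_jR, and let Q be the 0–1 matrix with Q_{ij} = 1 iff a_jR ⊆ (a_iR)⊥ = {r ∈ R : a_i r = 0}. Then Q = A P for some (t+1)×(t+1) permutation matrix P. Furthermore, the representatives a_0, …, a_t can be chosen (reordered) so that (a_iR)⊥ = a_{t−i}R for all i = 0, …, t; for such a choice Q = A J, where J is the (t+1)×(t+1) anti-diagonal matrix with all anti-diagonal entries equal to 1. -/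
noncomputable section
open scoped BigOperators

open Classical

/-- The adjacency matrix `A` of the poset of principal ideals of `R`:
`A_{ij} = 1` iff `a_i R ⊆ a_j R`. -/
def adjMat {R : Type*} [CommRing R] {t : ℕ} (a : Fin (t + 1) → R) :
    Matrix (Fin (t + 1)) (Fin (t + 1)) ℚ :=
  Matrix.of fun i j => if Ideal.span {a i} ≤ Ideal.span {a j} then 1 else 0

/-- The matrix `Q`: `Q_{ij} = 1` iff `a_j R ⊆ (a_i R)⊥ = {r : a_i r = 0}`. -/
def qMat {R : Type*} [CommRing R] {t : ℕ} (a : Fin (t + 1) → R) :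
    Matrix (Fin (t + 1)) (Fin (t + 1)) ℚ :=
  Matrix.of fun i j => if ∀ r ∈ Ideal.span {a j}, a i * r = 0 then 1 else 0

/-- The anti-diagonal matrix `J` with all anti-diagonal entries equal to `1`. -/
def antiDiagMat (t : ℕ) : Matrix (Fin (t + 1)) (Fin (t + 1)) ℚ :=
  Matrix.of fun i j => if j = i.rev then 1 else 0

section AuxAnn
variable {R : Type*} [CommRing R]

/-- The annihilator of an element as an ideal. -/
def annSet (x : R) : Ideal R where
  carrier := {r | x * r = 0}
  add_mem' := by intro a b ha hb; simp only [Set.mem_setOf_eq] at *; rw [mul_add, ha, hb, add_zero]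
  zero_mem' := by simp
  smul_mem' := by
    intro c r hr; simp only [Set.mem_setOf_eq, smul_eq_mul] at *
    rw [mul_comm c r, ← mul_assoc, hr, zero_mul]

lemma mem_annSet {x r : R} : r ∈ annSet x ↔ x * r = 0 := Iff.rfl

lemma span_le_annSet {x w : R} : Ideal.span {w} ≤ annSet x ↔ x * w = 0 := by
  constructor
  · intro h; exact h (Ideal.mem_span_singleton_self w)
  · intro h; rw [Ideal.span_le, Set.singleton_subset_iff]; exact h

lemma span_le_annSet_comm {x w : R} :
    Ideal.span {w} ≤ annSet x ↔ Ideal.span {x} ≤ annSet w := by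
  rw [span_le_annSet, span_le_annSet, mul_comm]

lemma annSet_congr {x y : R} (h : Ideal.span ({x} : Set R) = Ideal.span {y}) :
    annSet x = annSet y := by
  have hx : y ∣ x := Ideal.mem_span_singleton.mp (h ▸ Ideal.mem_span_singleton_self x)
  have hy : x ∣ y := Ideal.mem_span_singleton.mp (h ▸ Ideal.mem_span_singleton_self y)
  obtain ⟨u, hu⟩ := hx; obtain ⟨v, hv⟩ := hy
  ext r
  simp only [mem_annSet]
  constructor
  · intro hr; rw [hv, mul_assoc, mul_comm v r, ← mul_assoc, hr, zero_mul]
  · intro hr; rw [hu, mul_assoc, mul_comm u r, ← mul_assoc, hr, zero_mul]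

lemma card_span_mul_card_annSet [Fintype R] (x : R) :
    Nat.card (Ideal.span {x} : Ideal R) * Nat.card (annSet x) = Nat.card R := by
  have hker : LinearMap.ker (LinearMap.toSpanSingleton R R x) = annSet x := by
    ext r
    simp only [LinearMap.mem_ker, LinearMap.toSpanSingleton_apply, mem_annSet, smul_eq_mul]
    rw [mul_comm]
  have hrange : LinearMap.range (LinearMap.toSpanSingleton R R x)
      = (Ideal.span {x} : Ideal R) := by
    rw [← LinearMap.span_singleton_eq_range]
  have := Submodule.card_eq_card_quotient_mul_card
    (LinearMap.ker (LinearMap.toSpanSingleton R R x))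
  have hiso : Nat.card (R ⧸ LinearMap.ker (LinearMap.toSpanSingleton R R x))
      = Nat.card (Ideal.span {x} : Ideal R) := by
    rw [← hrange]
    exact Nat.card_congr (LinearMap.quotKerEquivRange (LinearMap.toSpanSingleton R R x)).toEquiv
  rw [hker] at this hiso
  rw [hiso] at this
  rw [mul_comm]
  exact this.symm

lemma doubleAnn [Fintype R] [IsPrincipalIdealRing R] (x : R) :
    ∃ g : R, annSet x = Ideal.span {g} ∧ annSet g = Ideal.span {x} := by
  obtain ⟨g, hg⟩ := (IsPrincipalIdealRing.principal (annSet x)).principal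
  rw [Ideal.submodule_span_eq] at hg
  refine ⟨g, hg, ?_⟩
  have hle : Ideal.span {x} ≤ annSet g := by
    rw [span_le_annSet, mul_comm]
    have : g ∈ annSet x := hg ▸ Ideal.mem_span_singleton_self g
    exact this
  have c1 := card_span_mul_card_annSet x
  have c2 := card_span_mul_card_annSet g
  rw [hg] at c1
  have hpos : 0 < Nat.card (Ideal.span {g} : Ideal R) := Nat.card_pos
  have hcard : Nat.card (annSet g) = Nat.card (Ideal.span {x} : Ideal R) := by
    have := c1.trans c2.symm
    exact (Nat.eq_of_mul_eq_mul_left hpos (by linarith [this])).symm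
  have hsets : (Ideal.span {x} : Set R) = (annSet g : Set R) := by
    apply Set.eq_of_subset_of_ncard_le hle
    rw [← Nat.card_coe_set_eq, ← Nat.card_coe_set_eq]
    simp only [SetLike.coe_sort_coe]
    omega
  exact SetLike.coe_injective hsets.symm

lemma pow_idem_aux (e : R) (p d : ℕ) (hp1 : 1 ≤ p) (hd1 : 1 ≤ d)
    (hbase : e ^ p = e ^ p * e ^ d) :
    ∃ m : ℕ, 1 ≤ m ∧ e ^ m * e ^ m = e ^ m := by
  have hstep : ∀ k : ℕ, e ^ (p + k * d) = e ^ p := by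
    intro k
    induction k with
    | zero => simp
    | succ k ih =>
      have h : p + (k + 1) * d = (p + k * d) + d := by ring
      rw [h, pow_add, ih, ← hbase]
  refine ⟨p * d, Nat.mul_pos hp1 hd1, ?_⟩
  have hple : p ≤ p * d := Nat.le_mul_of_pos_right p hd1
  have h1 : e ^ (p + p * d) = e ^ p := hstep p
  have h2 : p * d + p * d = (p * d - p) + (p + p * d) := by omega
  have h3 : p * d - p + p = p * d := by omega
  calc e ^ (p * d) * e ^ (p * d) = e ^ (p * d + p * d) := by rw [pow_add]
    _ = e ^ (p * d - p) * e ^ (p + p * d) := by rw [h2, pow_add]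
    _ = e ^ (p * d - p) * e ^ p := by rw [h1]
    _ = e ^ (p * d) := by rw [← pow_add, h3]

lemma exists_pow_idem [Fintype R] (e : R) :
    ∃ m : ℕ, 1 ≤ m ∧ e ^ m * e ^ m = e ^ m := by
  obtain ⟨i, j, hij, hne⟩ := Finite.exists_ne_map_eq_of_infinite (fun n : ℕ => e ^ (n + 1))
  wlog hlt : i < j generalizing i j
  · exact this j i hij.symm hne.symm (by omega)
  refine pow_idem_aux e (i + 1) (j - i) (by omega) (by omega) ?_
  rw [← pow_add]
  have h : i + 1 + (j - i) = j + 1 := by omega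
  rw [h]
  exact hne


lemma annSet_quot (E x : R) (hE : E * E = E)
    (hx : annSet x = Ideal.span {x}) (hx2 : x * x = 0) :
    annSet (Ideal.Quotient.mk (Ideal.span {E}) x)
      = Ideal.span {Ideal.Quotient.mk (Ideal.span {E}) x} := by
  ext rq
  obtain ⟨r, rfl⟩ := Ideal.Quotient.mk_surjective rq
  simp only [mem_annSet, Ideal.mem_span_singleton]
  constructor
  · intro h
    have hxr : x * r ∈ Ideal.span {E} := by
      rw [← map_mul] at h
      exact Ideal.Quotient.eq_zero_iff_mem.mp h
    obtain ⟨s, hs⟩ := Ideal.mem_span_singleton.mp hxr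
    have h1 : x * ((1 - E) * r) = 0 := by linear_combination (1 - E) * hs - s * hE
    have h2 : (1 - E) * r ∈ annSet x := h1
    rw [hx] at h2
    obtain ⟨w, hw⟩ := Ideal.mem_span_singleton.mp h2
    refine ⟨Ideal.Quotient.mk _ w, ?_⟩
    rw [← map_mul, Ideal.Quotient.eq, Ideal.mem_span_singleton]
    exact ⟨r, by linear_combination hw⟩
  · rintro ⟨wq, hwq⟩
    obtain ⟨w, rfl⟩ := Ideal.Quotient.mk_surjective wq
    rw [hwq, ← map_mul, ← map_mul, Ideal.Quotient.eq_zero_iff_mem]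
    have hz : x * (x * w) = 0 := by linear_combination w * hx2
    rw [hz]
    exact Ideal.zero_mem _

end AuxAnn

section KeyB
universe u
open Classical

lemma keyB : ∀ (n : ℕ) (R : Type u) [CommRing R] [Fintype R] [IsPrincipalIdealRing R],
    Fintype.card R ≤ n → ∀ x y : R,
    annSet x = Ideal.span {x} → annSet y = Ideal.span {y} →
    Ideal.span ({x} : Set R) = Ideal.span {y} := by
  intro n
  induction n with
  | zero =>
    intro R _ _ _ hcard
    have := Fintype.card_pos (α := R)
    omega
  | succ n IH =>
    intro R _ _ _ hcard x y hx hy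
    by_contra hne
    have hx2 : x * x = 0 := by
      have : x ∈ annSet x := by rw [hx]; exact Ideal.mem_span_singleton_self x
      exact this
    have hy2 : y * y = 0 := by
      have : y ∈ annSet y := by rw [hy]; exact Ideal.mem_span_singleton_self y
      exact this
    have hxy : x * y ≠ 0 := by
      intro h0
      apply hne
      have h1 : y ∈ Ideal.span ({x} : Set R) := by rw [← hx]; exact h0
      have h2 : x ∈ Ideal.span ({y} : Set R) := by
        rw [← hy]; show y * x = 0; rw [mul_comm]; exact h0
      exact le_antisymm ((Ideal.span_singleton_le_iff_mem _).mpr h2)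
        ((Ideal.span_singleton_le_iff_mem _).mpr h1)
    obtain ⟨z, hz⟩ :=
      (IsPrincipalIdealRing.principal (Ideal.span {x} ⊔ Ideal.span {y})).principal
    rw [Ideal.submodule_span_eq] at hz
    obtain ⟨c, hc⟩ : ∃ c, x = z * c := by
      have : x ∈ Ideal.span ({z} : Set R) := by
        rw [← hz]; exact Ideal.mem_sup_left (Ideal.mem_span_singleton_self x)
      exact Ideal.mem_span_singleton.mp this
    obtain ⟨d, hd⟩ : ∃ d, y = z * d := by
      have : y ∈ Ideal.span ({z} : Set R) := by
        rw [← hz]; exact Ideal.mem_sup_right (Ideal.mem_span_singleton_self y)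
      exact Ideal.mem_span_singleton.mp this
    obtain ⟨p, hp, q, hq, hpq⟩ := Submodule.mem_sup.mp
      (show z ∈ Ideal.span {x} ⊔ Ideal.span {y} by
        rw [hz]; exact Ideal.mem_span_singleton_self z)
    obtain ⟨A, hA⟩ := Ideal.mem_span_singleton.mp hp
    obtain ⟨B, hB⟩ := Ideal.mem_span_singleton.mp hq
    -- z * (1 - c*A - d*B) = 0
    have hzl : z * (1 - c * A - d * B) = 0 := by
      linear_combination -hpq + hA + hB + A * hc + B * hd
    have hannz : ∀ r : R, z * r = 0 → x * r = 0 ∧ y * r = 0 := by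
      intro r hr
      constructor
      · rw [hc]; linear_combination c * hr
      · rw [hd]; linear_combination d * hr
    have hl2 : (1 - c * A - d * B) * (1 - c * A - d * B) = 0 := by
      have hxl : x * (1 - c * A - d * B) = 0 := (hannz _ hzl).1
      have : (1 - c * A - d * B) ∈ annSet x := hxl
      rw [hx] at this
      obtain ⟨s, hs⟩ := Ideal.mem_span_singleton.mp this
      rw [hs]
      linear_combination s * s * hx2
    obtain ⟨m, hm1, hmE⟩ := exists_pow_idem (c * A)
    by_cases hE0 : (c * A) ^ m = 0
    · -- c*A nilpotent hence d*B is a unit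
      have hnil : IsNilpotent (c * A + (1 - c * A - d * B)) :=
        (Commute.all _ _).isNilpotent_add ⟨m, hE0⟩ ⟨2, by rw [sq]; exact hl2⟩
      have hunit : IsUnit (1 - (c * A + (1 - c * A - d * B))) := hnil.isUnit_one_sub
      have heq : 1 - (c * A + (1 - c * A - d * B)) = d * B := by ring
      rw [heq] at hunit
      obtain ⟨u, hu⟩ := hunit.exists_left_inv
      apply hxy
      calc x * y = (x * y) * (u * (d * B)) := by rw [hu, mul_one]
        _ = (c * u * B) * (y * (z * d)) := by rw [hc]; ring
        _ = (c * u * B) * (y * y) := by rw [← hd]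
        _ = 0 := by rw [hy2, mul_zero]
    · by_cases hE1 : (c * A) ^ m = 1
      · have hu : (c * A) * (c * A) ^ (m - 1) = 1 := by
          have h : (c * A) * (c * A) ^ (m - 1) = (c * A) ^ m := by
            rw [← pow_succ']
            congr 1
            omega
          rw [h, hE1]
        apply hxy
        calc x * y = (x * y) * ((c * A) * (c * A) ^ (m - 1)) := by rw [hu, mul_one]
          _ = ((c * A) ^ (m - 1) * A * d) * (x * (z * c)) := by rw [hd]; ring
          _ = ((c * A) ^ (m - 1) * A * d) * (x * x) := by rw [← hc]
          _ = 0 := by rw [hx2, mul_zero]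
      · -- nontrivial idempotent E
        obtain ⟨E, hEdef⟩ : ∃ E : R, E = (c * A) ^ m := ⟨_, rfl⟩
        rw [← hEdef] at hmE hE0 hE1
        have hEid : E * E = E := hmE
        have hE1id : (1 - E) * (1 - E) = 1 - E := by linear_combination hEid
        have h1top : Ideal.span ({E} : Set R) ≠ ⊤ := by
          intro htop
          have : (1 : R) ∈ Ideal.span ({E} : Set R) := htop ▸ Submodule.mem_top
          obtain ⟨v, hv⟩ := Ideal.mem_span_singleton.mp this
          exact hE1 (by linear_combination (E - 1) * hv + v * hEid)
        have h2top : Ideal.span ({1 - E} : Set R) ≠ ⊤ := by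
          intro htop
          have : (1 : R) ∈ Ideal.span ({1 - E} : Set R) := htop ▸ Submodule.mem_top
          obtain ⟨v, hv⟩ := Ideal.mem_span_singleton.mp this
          exact hE0 (by linear_combination E * hv - v * hEid)
        haveI : IsPrincipalIdealRing (R ⧸ Ideal.span ({E} : Set R)) :=
          IsPrincipalIdealRing.of_surjective (Ideal.Quotient.mk _) Ideal.Quotient.mk_surjective
        haveI : IsPrincipalIdealRing (R ⧸ Ideal.span ({1 - E} : Set R)) :=
          IsPrincipalIdealRing.of_surjective (Ideal.Quotient.mk _) Ideal.Quotient.mk_surjective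
        haveI hnt1 : Nontrivial (R ⧸ Ideal.span ({E} : Set R)) :=
          Ideal.Quotient.nontrivial_iff.mpr h1top
        haveI hnt2 : Nontrivial (R ⧸ Ideal.span ({1 - E} : Set R)) :=
          Ideal.Quotient.nontrivial_iff.mpr h2top
        -- the ring equivalence with the product
        have hco : IsCoprime (Ideal.span ({E} : Set R)) (Ideal.span ({1 - E} : Set R)) := by
          rw [Ideal.isCoprime_iff_sup_eq, Ideal.eq_top_iff_one]
          have hmem : E + (1 - E) ∈ Ideal.span ({E} : Set R) ⊔ Ideal.span ({1 - E} : Set R) :=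
            add_mem (Ideal.mem_sup_left (Ideal.mem_span_singleton_self _))
              (Ideal.mem_sup_right (Ideal.mem_span_singleton_self _))
          simpa using hmem
        have hinf : Ideal.span ({E} : Set R) ⊓ Ideal.span ({1 - E} : Set R) = ⊥ := by
          apply le_antisymm _ bot_le
          intro r hr
          obtain ⟨hr1, hr2⟩ := Submodule.mem_inf.mp hr
          obtain ⟨s1, hs1⟩ := Ideal.mem_span_singleton.mp hr1
          obtain ⟨s2, hs2⟩ := Ideal.mem_span_singleton.mp hr2
          have : r = 0 := by
            linear_combination (1 - E) * hs1 - s1 * hEid + E * hs2 - s2 * hEid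
          simpa using this
        let Φ : R ≃+* (R ⧸ Ideal.span ({E} : Set R)) × (R ⧸ Ideal.span ({1 - E} : Set R)) :=
          ((RingEquiv.quotientBot R).symm.trans (Ideal.quotEquivOfEq hinf.symm)).trans
            (Ideal.quotientInfEquivQuotientProd _ _ hco)
        have hcardeq : Fintype.card R =
            Fintype.card (R ⧸ Ideal.span ({E} : Set R)) *
            Fintype.card (R ⧸ Ideal.span ({1 - E} : Set R)) := by
          rw [← Fintype.card_prod]
          exact Fintype.card_congr Φ.toEquiv
        have h1lt : 1 < Fintype.card (R ⧸ Ideal.span ({E} : Set R)) := Fintype.one_lt_card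
        have h2lt : 1 < Fintype.card (R ⧸ Ideal.span ({1 - E} : Set R)) := Fintype.one_lt_card
        have hle1 : Fintype.card (R ⧸ Ideal.span ({E} : Set R)) ≤ n := by
          have := Nat.mul_le_mul_left (Fintype.card (R ⧸ Ideal.span ({E} : Set R))) h2lt
          omega
        have hle2 : Fintype.card (R ⧸ Ideal.span ({1 - E} : Set R)) ≤ n := by
          have := Nat.mul_le_mul_right (Fintype.card (R ⧸ Ideal.span ({1 - E} : Set R))) h1lt
          omega
        have e1 := IH (R ⧸ Ideal.span ({E} : Set R)) hle1
          (Ideal.Quotient.mk _ x) (Ideal.Quotient.mk _ y)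
          (annSet_quot E x hEid hx hx2) (annSet_quot E y hEid hy hy2)
        have e2 := IH (R ⧸ Ideal.span ({1 - E} : Set R)) hle2
          (Ideal.Quotient.mk _ x) (Ideal.Quotient.mk _ y)
          (annSet_quot (1 - E) x hE1id hx hx2) (annSet_quot (1 - E) y hE1id hy hy2)
        -- extract divisibilities
        have dvd1 : ∀ u v : R,
            Ideal.span {Ideal.Quotient.mk (Ideal.span ({E} : Set R)) u} =
              Ideal.span {Ideal.Quotient.mk (Ideal.span ({E} : Set R)) v} →
            ∃ w s : R, u - v * w = E * s := by
          intro u v h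
          have : Ideal.Quotient.mk (Ideal.span ({E} : Set R)) u ∈
              Ideal.span {Ideal.Quotient.mk (Ideal.span ({E} : Set R)) v} := by
            rw [← h]; exact Ideal.mem_span_singleton_self _
          obtain ⟨wq, hwq⟩ := Ideal.mem_span_singleton.mp this
          obtain ⟨w, rfl⟩ := Ideal.Quotient.mk_surjective wq
          rw [← map_mul, Ideal.Quotient.eq] at hwq
          obtain ⟨s, hs⟩ := Ideal.mem_span_singleton.mp hwq
          exact ⟨w, s, hs⟩
        have dvd2 : ∀ u v : R,
            Ideal.span {Ideal.Quotient.mk (Ideal.span ({1 - E} : Set R)) u} =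
              Ideal.span {Ideal.Quotient.mk (Ideal.span ({1 - E} : Set R)) v} →
            ∃ w s : R, u - v * w = (1 - E) * s := by
          intro u v h
          have : Ideal.Quotient.mk (Ideal.span ({1 - E} : Set R)) u ∈
              Ideal.span {Ideal.Quotient.mk (Ideal.span ({1 - E} : Set R)) v} := by
            rw [← h]; exact Ideal.mem_span_singleton_self _
          obtain ⟨wq, hwq⟩ := Ideal.mem_span_singleton.mp this
          obtain ⟨w, rfl⟩ := Ideal.Quotient.mk_surjective wq
          rw [← map_mul, Ideal.Quotient.eq] at hwq
          obtain ⟨s, hs⟩ := Ideal.mem_span_singleton.mp hwq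
          exact ⟨w, s, hs⟩
        obtain ⟨w1, s1, hw1⟩ := dvd1 x y e1
        obtain ⟨w2, s2, hw2⟩ := dvd2 x y e2
        obtain ⟨w3, s3, hw3⟩ := dvd1 y x e1.symm
        obtain ⟨w4, s4, hw4⟩ := dvd2 y x e2.symm
        apply hne
        have hxdvd : x = y * ((1 - E) * w1 + E * w2) := by
          linear_combination (1 - E) * hw1 + E * hw2 - (s1 + s2) * hEid
        have hydvd : y = x * ((1 - E) * w3 + E * w4) := by
          linear_combination (1 - E) * hw3 + E * hw4 - (s3 + s4) * hEid
        apply le_antisymm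
        · rw [Ideal.span_singleton_le_span_singleton]
          exact ⟨_, hxdvd⟩
        · rw [Ideal.span_singleton_le_span_singleton]
          exact ⟨_, hydvd⟩
end KeyB


section Comb
open Equiv

lemma invol_conj {α : Type*} [Fintype α] [DecidableEq α]
    (g h : Equiv.Perm α) (hg : g * g = 1) (hh : h * h = 1)
    (hgfix : ∀ i j, g i = i → g j = j → i = j)
    (hhfix : ∀ i j, h i = i → h j = j → i = j) :
    IsConj g h := by
  rw [Equiv.Perm.isConj_iff_cycleType_eq]
  have korder : ∀ (f : Equiv.Perm α), f * f = 1 → ∀ n ∈ f.cycleType, n = 2 := by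
    intro f hf n hn
    have h2 : 2 ≤ n := Equiv.Perm.two_le_of_mem_cycleType hn
    have hdvd : n ∣ orderOf f := Equiv.Perm.lcm_cycleType f ▸ Multiset.dvd_lcm hn
    have ho2 : orderOf f ∣ 2 := orderOf_dvd_of_pow_eq_one (by rw [pow_two]; exact hf)
    have hn2 : n ∣ 2 := hdvd.trans ho2
    have := Nat.le_of_dvd (by norm_num) hn2
    omega
  have hrepl : ∀ f : Equiv.Perm α, f * f = 1 →
      f.cycleType = Multiset.replicate (Multiset.card f.cycleType) 2 := by
    intro f hf
    exact Multiset.eq_replicate_card.mpr (korder f hf)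
  have hsum : ∀ f : Equiv.Perm α, f * f = 1 →
      2 * Multiset.card f.cycleType = f.support.card := by
    intro f hf
    conv_rhs => rw [← Equiv.Perm.sum_cycleType]
    rw [hrepl f hf, Multiset.sum_replicate, Multiset.card_replicate]
    ring_nf
  have hcompl : ∀ f : Equiv.Perm α, (∀ i j, f i = i → f j = j → i = j) →
      f.supportᶜ.card ≤ 1 := by
    intro f hffix
    apply Finset.card_le_one.mpr
    intro i hi j hj
    rw [Finset.mem_compl, Equiv.Perm.notMem_support] at hi hj
    exact hffix i j hi hj
  have hcc : ∀ f : Equiv.Perm α, f.supportᶜ.card = Fintype.card α - f.support.card := by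
    intro f; rw [Finset.card_compl]
  have hle : ∀ f : Equiv.Perm α, f.support.card ≤ Fintype.card α := fun f =>
    Finset.card_le_univ _
  have hcardg := hcompl g hgfix
  have hcardh := hcompl h hhfix
  rw [hcc] at hcardg hcardh
  have hsg := hsum g hg
  have hsh := hsum h hh
  have hsupp : g.support.card = h.support.card := by
    have := hle g; have := hle h
    omega
  rw [hrepl g hg, hrepl h hh]
  congr 1
  omega

end Comb


lemma ite10 {P Q : Prop} (dP : Decidable P) (dQ : Decidable Q) (h : P ↔ Q) :
    (@ite _ P dP (1 : ℚ) 0) = @ite _ Q dQ 1 0 := by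
  by_cases hp : P
  · rw [if_pos hp, if_pos (h.mp hp)]
  · rw [if_neg hp, if_neg (fun hq => hp (h.mpr hq))]

lemma forall_span_iff {R : Type*} [CommRing R] {v w : R} :
    (∀ r ∈ Ideal.span ({w} : Set R), v * r = 0) ↔ Ideal.span {w} ≤ annSet v :=
  Iff.rfl


/-- over a finite commutative principal ideal ring, `Q = A P`
for a permutation matrix `P`; moreover the representatives can be reordered so
that `(a_i R)⊥ = a_{t−i} R` for all `i`, and for such a choice `Q = A J`. -/
theorem stmt12 {R : Type*} [CommRing R] [Fintype R] [IsPrincipalIdealRing R]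
    {t : ℕ} (a : Fin (t + 1) → R)
    (hrep : ∀ r : R, ∃ i, Ideal.span {r} = Ideal.span {a i})
    (hinj : ∀ i j, Ideal.span {a i} = Ideal.span {a j} → i = j) :
    (∃ σ : Equiv.Perm (Fin (t + 1)), qMat a = adjMat a * σ.permMatrix ℚ) ∧
    (∃ σ : Equiv.Perm (Fin (t + 1)),
      (∀ i : Fin (t + 1),
        {r : R | a (σ i) * r = 0} = (Ideal.span {a (σ i.rev)} : Set R)) ∧
      qMat (a ∘ σ) = adjMat (a ∘ σ) * antiDiagMat t) := by
  have key : ∀ i, ∃ j, annSet (a i) = Ideal.span {a j} ∧ annSet (a j) = Ideal.span {a i} := by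
    intro i
    obtain ⟨g, h1, h2⟩ := doubleAnn (a i)
    obtain ⟨j, hj⟩ := hrep g
    exact ⟨j, by rw [h1, hj], by rw [← annSet_congr hj, h2]⟩
  choose πf hπ1 hπ2 using key
  have hinvol : Function.Involutive πf := by
    intro i
    apply hinj
    rw [← hπ1 (πf i), hπ2 i]
  let π : Equiv.Perm (Fin (t + 1)) := Function.Involutive.toPerm πf hinvol
  have hπapp : ∀ i, π i = πf i := fun i => rfl
  have hπsymm : π.symm = π := Function.Involutive.toPerm_symm hinvol
  have hiffQ : ∀ (i j : Fin (t + 1)),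
      ((∀ r ∈ Ideal.span ({a j} : Set R), a i * r = 0) ↔
        Ideal.span {a i} ≤ Ideal.span {a (πf j)}) := by
    intro i j
    rw [forall_span_iff, span_le_annSet_comm, hπ1 j]
  constructor
  · refine ⟨π, ?_⟩
    have hmul : adjMat a * π.permMatrix ℚ = (adjMat a).submatrix id π.symm :=
      PEquiv.mul_toMatrix_toPEquiv (adjMat a) π
    rw [hmul]
    ext i j
    simp only [Matrix.submatrix_apply, id_eq, hπsymm, hπapp, qMat, adjMat, Matrix.of_apply]
    exact ite10 _ _ (hiffQ i j)
  · -- fixed points of πf are unique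
    have hfix : ∀ i j, πf i = i → πf j = j → i = j := by
      intro i j hi hj
      apply hinj
      apply keyB (Fintype.card R) R le_rfl
      · rw [hπ1 i, hi]
      · rw [hπ1 j, hj]
    have hπ2eq : π * π = 1 := Equiv.ext fun i => hinvol i
    have hρ2 : (Fin.revPerm : Equiv.Perm (Fin (t + 1))) * Fin.revPerm = 1 :=
      Equiv.ext fun i => Fin.rev_rev i
    have hρfix : ∀ i j : Fin (t + 1), Fin.revPerm i = i → Fin.revPerm j = j → i = j := by
      intro i j hi hj
      have hi' : (Fin.rev i : Fin (t+1)).val = i.val := congrArg Fin.val hi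
      have hj' : (Fin.rev j : Fin (t+1)).val = j.val := congrArg Fin.val hj
      rw [Fin.val_rev] at hi' hj'
      have h1 := i.isLt
      have h2 := j.isLt
      apply Fin.ext
      omega
    have hconj : IsConj (Fin.revPerm : Equiv.Perm (Fin (t + 1))) π :=
      invol_conj _ _ hρ2 hπ2eq hρfix hfix
    obtain ⟨σu, hσu⟩ := isConj_iff.mp hconj
    have hkey : ∀ i, σu (Fin.rev i) = πf (σu i) := by
      intro i
      have happ := congrArg (fun p : Equiv.Perm (Fin (t + 1)) => p (σu i)) hσu
      simp only [Equiv.Perm.mul_apply] at happ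
      rw [Equiv.Perm.inv_def, Equiv.symm_apply_apply] at happ
      exact happ
    refine ⟨σu, ?_, ?_⟩
    · intro i
      have h1 : annSet (a (σu i)) = Ideal.span {a (σu i.rev)} := by
        rw [hπ1 (σu i), ← hkey i]
      have := congrArg (fun I : Ideal R => (I : Set R)) h1
      exact this
    · ext i j
      rw [Matrix.mul_apply]
      have hterm : ∀ k, adjMat (a ∘ σu) i k * antiDiagMat t k j =
          if k = j.rev then adjMat (a ∘ σu) i k else 0 := by
        intro k
        simp only [antiDiagMat, Matrix.of_apply]
        by_cases hk : k = j.rev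
        · subst hk
          rw [Fin.rev_rev]
          simp
        · have hk2 : ¬ (j = k.rev) := fun h => hk (by rw [h, Fin.rev_rev])
          simp [hk, hk2]
      rw [Finset.sum_congr rfl (fun k _ => hterm k), Finset.sum_ite_eq' Finset.univ]
      simp only [Finset.mem_univ, if_true]
      simp only [qMat, adjMat, Matrix.of_apply, Function.comp_apply]
      apply ite10 _ _
      rw [forall_span_iff, span_le_annSet_comm, hπ1 (σu j), ← hkey j]

end
end
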